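/- arXiv:math/0406399 — 2 statements merged into one kernel-verified Lean document; each statement's English description precedes it below -/
import Mathlib

section
/- Let m ≥ 1 be an integer and γ ∈ (0, π/2) with γ < π/(2m), and let p = (R sin ψ, R cos ψ) ∈ W_γ with R > 0 and π/2 − γ < ψ < π/2. Then every closed 2m-bounce billiard path based at p has total length 2R·sin(mγ); moreover there are at most two such paths, and if there are two then one is the reverse of the other. -/
open Real

noncomputable section

/-- The Euclidean plane. -/
abbrev E2 := EuclideanSpace ℝ (Fin 2)

/-- Construct a point of the plane from its coordinates. -/
def pt (x y : ℝ) : E2 := WithLp.toLp 2 ![x, y]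

/-- The open wedge of opening angle `γ`, bounded by the horizontal line `{y = 0}`
and the line `{y = x·tan γ}`. -/
def wedge (γ : ℝ) : Set E2 := {p | 0 < p 0 ∧ 0 < p 1 ∧ p 1 < p 0 * Real.tan γ}

/-- A direction vector of the boundary line: the horizontal line if `horiz`, the
line `{y = x·tan γ}` otherwise. -/
def lineDir (γ : ℝ) (horiz : Bool) : E2 :=
  if horiz then pt 1 0 else pt (Real.cos γ) (Real.sin γ)

/-- Membership of the corresponding boundary line. -/
def onBoundary (γ : ℝ) (horiz : Bool) (p : E2) : Prop :=
  if horiz then p 1 = 0 else p 1 = p 0 * Real.tan γ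

/-- The linear reflection of `ℝ²` across the `1`-dimensional subspace spanned by `d`,
applied to `v` (for `d ≠ 0`). -/
def reflDir (d v : E2) : E2 :=
  (2 * (inner ℝ v d : ℝ) / (inner ℝ d d : ℝ)) • d - v

/-- A closed `n`-bounce billiard path based at the point `p` of the wedge `W_γ`:
a sequence `q 0 = p, q 1, …, q n, q (n+1) = p` with consecutive points distinct,
whose intermediate points lie alternately on the two boundary lines (minus the
vertex), whose open segments lie in the open wedge, and which satisfies the law
of reflection at each bounce. -/
structure ClosedBounce (γ : ℝ) (p : E2) (n : ℕ) where
  q : ℕ → E2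
  /-- `horiz k` records whether the `k`-th bounce is on the horizontal line `ℓ₀`. -/
  horiz : ℕ → Bool
  alt : ∀ k, 1 ≤ k → k < n → horiz (k + 1) = !horiz k
  start : q 0 = p
  closes : q (n + 1) = p
  distinct : ∀ k ≤ n, q k ≠ q (k + 1)
  bounce_ne_vertex : ∀ k, 1 ≤ k → k ≤ n → q k ≠ 0
  onLine : ∀ k, 1 ≤ k → k ≤ n → onBoundary γ (horiz k) (q k)
  segs_in_wedge : ∀ k ≤ n, ∀ t : ℝ, 0 < t → t < 1 →
    (1 - t) • q k + t • q (k + 1) ∈ wedge γ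
  reflects : ∀ k, 1 ≤ k → k ≤ n →
    (‖q (k + 1) - q k‖)⁻¹ • (q (k + 1) - q k) =
      reflDir (lineDir γ (horiz k)) ((‖q k - q (k - 1)‖)⁻¹ • (q k - q (k - 1)))

/-- The total length of a closed `n`-bounce billiard path. -/
def totalLength {γ : ℝ} {p : E2} {n : ℕ} (P : ClosedBounce γ p n) : ℝ :=
  ∑ k ∈ Finset.range (n + 1), ‖P.q (k + 1) - P.q k‖


/- ### Auxiliary geometry lemmas ### -/

@[simp] lemma pt_zero (x y : ℝ) : pt x y 0 = x := rfl
@[simp] lemma pt_one (x y : ℝ) : pt x y 1 = y := rfl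
lemma e2_ext {a b : E2} (h0 : a 0 = b 0) (h1 : a 1 = b 1) : a = b := by
  ext i; fin_cases i <;> assumption
@[simp] lemma e2_add (a b : E2) (i : Fin 2) : (a + b) i = a i + b i := rfl
@[simp] lemma e2_sub (a b : E2) (i : Fin 2) : (a - b) i = a i - b i := rfl
@[simp] lemma e2_neg (a : E2) (i : Fin 2) : (-a) i = - a i := rfl
@[simp] lemma e2_smul (c : ℝ) (a : E2) (i : Fin 2) : (c • a) i = c * a i := rfl
@[simp] lemma e2_zero (i : Fin 2) : (0 : E2) i = 0 := rfl
lemma e2_inner (a b : E2) : (inner ℝ a b : ℝ) = a 0 * b 0 + a 1 * b 1 := by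
  simp [PiLp.inner_apply, Fin.sum_univ_two] <;> ring
lemma e2_norm (a : E2) : ‖a‖ = Real.sqrt (a 0 ^ 2 + a 1 ^ 2) := by
  rw [EuclideanSpace.norm_eq, Fin.sum_univ_two]; simp [sq_abs]

/-- rotation by θ -/
def vrot (θ : ℝ) (v : E2) : E2 :=
  pt (Real.cos θ * v 0 - Real.sin θ * v 1) (Real.sin θ * v 0 + Real.cos θ * v 1)

/-- reflection across line at angle θ -/
def vrefl (θ : ℝ) (v : E2) : E2 :=
  pt (Real.cos (2*θ) * v 0 + Real.sin (2*θ) * v 1)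
     (Real.sin (2*θ) * v 0 - Real.cos (2*θ) * v 1)

lemma norm_vrot (θ : ℝ) (v : E2) : ‖vrot θ v‖ = ‖v‖ := by
  rw [e2_norm, e2_norm]; congr 1
  have := Real.sin_sq_add_cos_sq θ
  simp only [vrot, pt_zero, pt_one]; nlinarith [this]

lemma vrot_zero (v : E2) : vrot 0 v = v := by
  apply e2_ext <;> simp [vrot]

lemma vrot_add (a : ℝ) (v w : E2) : vrot a (v + w) = vrot a v + vrot a w := by
  apply e2_ext <;> simp [vrot] <;> ring

lemma vrot_sub (a : ℝ) (v w : E2) : vrot a (v - w) = vrot a v - vrot a w := by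
  apply e2_ext <;> simp [vrot] <;> ring

lemma vrot_smul (a c : ℝ) (v : E2) : vrot a (c • v) = c • vrot a v := by
  apply e2_ext <;> simp [vrot] <;> ring

lemma reflDir_eq_vrefl (γ : ℝ) (h : Bool) (v : E2) :
    reflDir (lineDir γ h) v = vrefl (if h then 0 else γ) v := by
  have hd : Real.cos γ * Real.cos γ + Real.sin γ * Real.sin γ = 1 := by
    nlinarith [Real.sin_sq_add_cos_sq γ]
  cases h
  · apply e2_ext <;>
    · simp only [reflDir, lineDir, vrefl, e2_inner, if_true, if_false, Bool.false_eq_true,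
        e2_smul, e2_sub, pt_zero, pt_one]
      rw [Real.cos_two_mul, Real.sin_two_mul, hd]
      first
      | linear_combination 2 * v 1 * Real.sin_sq_add_cos_sq γ
      | ring
  · apply e2_ext <;>
    · simp only [reflDir, lineDir, vrefl, e2_inner, if_true, if_false,
        e2_smul, e2_sub, pt_zero, pt_one]
      norm_num <;> ring

lemma vrefl_vrefl (θ : ℝ) (v : E2) : vrefl θ (vrefl θ v) = v := by
  apply e2_ext
  · simp only [vrefl, pt_zero, pt_one]
    linear_combination (v 0) * Real.sin_sq_add_cos_sq (2*θ)
  · simp only [vrefl, pt_zero, pt_one]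
    linear_combination (v 1) * Real.sin_sq_add_cos_sq (2*θ)

lemma vrefl_neg (θ : ℝ) (v : E2) : vrefl θ (-v) = - vrefl θ v := by
  apply e2_ext <;> simp [vrefl] <;> ring

lemma reflDir_neg (d v : E2) : reflDir d (-v) = - reflDir d v := by
  apply e2_ext <;> simp [reflDir, e2_inner] <;> ring

/-- mirror angle of a bounce -/
def mang (γ : ℝ) (h : Bool) : ℝ := if h then 0 else γ

/-- accumulated rotation angle of the unfolding -/
def csum (γ : ℝ) (horiz : ℕ → Bool) : ℕ → ℝ
  | 0 => 0
  | k+1 => csum γ horiz k +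
      (if Even k then 2 * mang γ (horiz (k+1)) else -(2 * mang γ (horiz (k+1))))

/-- the unfolding isometry after k bounces -/
def unf (γ : ℝ) (horiz : ℕ → Bool) (k : ℕ) (v : E2) : E2 :=
  vrot (csum γ horiz k) (pt (v 0) ((-1)^k * v 1))

lemma unf_zero (γ : ℝ) (h : ℕ → Bool) (v : E2) : unf γ h 0 v = v := by
  apply e2_ext <;> simp [unf, vrot, csum]

lemma unf_succ (γ : ℝ) (h : ℕ → Bool) (k : ℕ) (v : E2) :
    unf γ h (k+1) v = unf γ h k (vrefl (mang γ (h (k+1))) v) := by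
  set θ := mang γ (h (k+1)) with hθ
  rcases Nat.even_or_odd k with hk | hk
  · have h1 : ((-1:ℝ))^k = 1 := hk.neg_one_pow
    have h2 : ((-1:ℝ))^(k+1) = -1 := by rw [pow_succ, h1]; ring
    apply e2_ext <;>
    · simp only [unf, csum, vrot, vrefl, pt_zero, pt_one, h1, h2, if_pos hk, ← hθ,
        Real.cos_add, Real.sin_add]
      ring
  · have h1 : ((-1:ℝ))^k = -1 := hk.neg_one_pow
    have h2 : ((-1:ℝ))^(k+1) = 1 := by rw [pow_succ, h1]; ring
    have hk' : ¬ Even k := Nat.not_even_iff_odd.mpr hk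
    apply e2_ext <;>
    · simp only [unf, csum, vrot, vrefl, pt_zero, pt_one, h1, h2, if_neg hk', ← hθ,
        Real.cos_add, Real.sin_add, Real.cos_neg, Real.sin_neg]
      ring

lemma unf_sub (γ : ℝ) (h : ℕ → Bool) (k : ℕ) (v w : E2) :
    unf γ h k (v - w) = unf γ h k v - unf γ h k w := by
  apply e2_ext <;> simp [unf, vrot] <;> ring

lemma unf_add (γ : ℝ) (h : ℕ → Bool) (k : ℕ) (v w : E2) :
    unf γ h k (v + w) = unf γ h k v + unf γ h k w := by
  apply e2_ext <;> simp [unf, vrot] <;> ring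

lemma unf_smul (γ : ℝ) (h : ℕ → Bool) (k : ℕ) (c : ℝ) (v : E2) :
    unf γ h k (c • v) = c • unf γ h k v := by
  apply e2_ext <;> simp [unf, vrot] <;> ring

lemma norm_unf (γ : ℝ) (h : ℕ → Bool) (k : ℕ) (v : E2) : ‖unf γ h k v‖ = ‖v‖ := by
  rw [e2_norm, e2_norm]; congr 1
  have h2 : ((-1:ℝ)^k)^2 = 1 := by
    rcases Nat.even_or_odd k with hk | hk
    · rw [hk.neg_one_pow]; norm_num
    · rw [hk.neg_one_pow]; norm_num
  simp only [unf, vrot, pt_zero, pt_one]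
  linear_combination (v 0 ^ 2 + ((-1:ℝ)^k * v 1) ^ 2) * Real.sin_sq_add_cos_sq (csum γ h k)
    + (v 1 ^ 2) * h2

lemma unf_inj (γ : ℝ) (h : ℕ → Bool) (k : ℕ) {v w : E2}
    (he : unf γ h k v = unf γ h k w) : v = w := by
  have : ‖v - w‖ = 0 := by
    rw [← norm_unf γ h k, unf_sub, he, sub_self, norm_zero]
  have := norm_eq_zero.mp this
  exact sub_eq_zero.mp this


/-- The linear functional cutting out the boundary line. -/
def lf (γ : ℝ) (b : Bool) (u : E2) : ℝ := if b then u 1 else u 1 - u 0 * Real.tan γ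

lemma onBoundary_iff_lf (γ : ℝ) (b : Bool) (u : E2) : onBoundary γ b u ↔ lf γ b u = 0 := by
  cases b <;> simp [onBoundary, lf, sub_eq_zero]

lemma lf_affine (γ : ℝ) (b : Bool) (x y : E2) (t : ℝ) :
    lf γ b (x + t • y) = lf γ b x + t * lf γ b y := by
  cases b <;> simp [lf] <;> ring

lemma both_lines_eq_zero {γ : ℝ} (ht : Real.tan γ ≠ 0) {u : E2}
    (h1 : u 1 = 0) (h2 : u 1 = u 0 * Real.tan γ) : u = 0 := by
  have h0 : u 0 = 0 := by
    rcases mul_eq_zero.mp (h1 ▸ h2.symm) with h | h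
    · exact h
    · exact absurd h ht
  exact e2_ext (by simpa using h0) (by simpa using h1)

lemma vrefl_fix {γ : ℝ} (hγ : Real.cos γ ≠ 0) {b : Bool} {u : E2}
    (hu : onBoundary γ b u) : vrefl (mang γ b) u = u := by
  cases b
  · simp only [onBoundary, Bool.false_eq_true, if_false] at hu
    rw [Real.tan_eq_sin_div_cos] at hu
    apply e2_ext <;>
    · simp only [vrefl, mang, Bool.false_eq_true, if_false, pt_zero, pt_one, hu,
        Real.cos_two_mul, Real.sin_two_mul]
      field_simp
      first
      | linear_combination 2 * Real.cos γ * u 0 * Real.sin_sq_add_cos_sq γ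
      | linear_combination 2 * u 0 * Real.sin_sq_add_cos_sq γ
      | ring1
  · simp only [onBoundary, if_true] at hu
    apply e2_ext <;> simp [vrefl, mang, hu]

lemma reflDir_invol (γ : ℝ) (b : Bool) (v : E2) :
    reflDir (lineDir γ b) (reflDir (lineDir γ b) v) = v := by
  rw [reflDir_eq_vrefl, reflDir_eq_vrefl, vrefl_vrefl]

section Path

variable {γ : ℝ} {p : E2} {n : ℕ}

/-- direction of the k-th segment -/
def dirv (P : ClosedBounce γ p n) (k : ℕ) : E2 :=
  ‖P.q (k+1) - P.q k‖⁻¹ • (P.q (k+1) - P.q k)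

lemma dirv_norm (P : ClosedBounce γ p n) {k : ℕ} (hk : k ≤ n) : ‖dirv P k‖ = 1 := by
  have hne : P.q (k+1) - P.q k ≠ 0 := sub_ne_zero.mpr (Ne.symm (P.distinct k hk))
  rw [dirv, norm_smul, norm_inv, norm_norm, inv_mul_cancel₀ (norm_ne_zero_iff.mpr hne)]

lemma q_succ_eq (P : ClosedBounce γ p n) {k : ℕ} (hk : k ≤ n) :
    P.q (k+1) = P.q k + ‖P.q (k+1) - P.q k‖ • dirv P k := by
  have hne : P.q (k+1) - P.q k ≠ 0 := sub_ne_zero.mpr (Ne.symm (P.distinct k hk))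
  rw [dirv, smul_smul, mul_inv_cancel₀ (norm_ne_zero_iff.mpr hne), one_smul]
  abel

lemma dirv_reflect (P : ClosedBounce γ p n) {k : ℕ} (hk1 : 1 ≤ k) (hk2 : k ≤ n) :
    dirv P k = reflDir (lineDir γ (P.horiz k)) (dirv P (k-1)) := by
  have := P.reflects k hk1 hk2
  have hk' : k - 1 + 1 = k := Nat.succ_pred_eq_of_pos hk1
  rw [dirv, dirv, hk']
  exact this

lemma dirv_unf (P : ClosedBounce γ p n) :
    ∀ k ≤ n, unf γ P.horiz k (dirv P k) = dirv P 0 := by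
  intro k hk
  induction k with
  | zero => exact unf_zero _ _ _
  | succ j ih =>
    rw [unf_succ]
    have hrefl := dirv_reflect P (Nat.le_add_left 1 j) hk
    simp only [Nat.add_sub_cancel] at hrefl
    rw [hrefl, reflDir_eq_vrefl]
    have : vrefl (mang γ (P.horiz (j+1))) (vrefl (if P.horiz (j+1) then 0 else γ) (dirv P j))
        = dirv P j := by
      have : mang γ (P.horiz (j+1)) = if P.horiz (j+1) then 0 else γ := rfl
      rw [this, vrefl_vrefl]
    rw [this]
    exact ih (Nat.le_of_succ_le hk)

lemma unf_pt (P : ClosedBounce γ p n) (hγ : Real.cos γ ≠ 0) :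
    ∀ j ≤ n, unf γ P.horiz j (P.q (j+1)) =
      p + (∑ k ∈ Finset.range (j+1), ‖P.q (k+1) - P.q k‖) • dirv P 0 := by
  intro j hj
  induction j with
  | zero =>
    rw [unf_zero, q_succ_eq P (Nat.zero_le n), P.start]
    simp [Finset.sum_range_one, P.start]
  | succ j ih =>
    have hj' : j ≤ n := Nat.le_of_succ_le hj
    rw [q_succ_eq P hj, unf_add, unf_smul, dirv_unf P (j+1) hj]
    rw [unf_succ, vrefl_fix hγ (P.onLine (j+1) (Nat.le_add_left 1 j) hj)]
    rw [ih hj']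
    simp only [Finset.sum_range_succ, add_smul]
    abel

lemma length_eq_norm (P : ClosedBounce γ p n) (hγ : Real.cos γ ≠ 0) :
    totalLength P = ‖unf γ P.horiz n p - p‖ := by
  have h := unf_pt P hγ n le_rfl
  rw [P.closes] at h
  have hL : (0:ℝ) ≤ ∑ k ∈ Finset.range (n+1), ‖P.q (k+1) - P.q k‖ :=
    Finset.sum_nonneg fun _ _ => norm_nonneg _
  rw [totalLength, h]
  rw [add_sub_cancel_left, norm_smul, dirv_norm P (Nat.zero_le n)]
  simp [abs_of_nonneg hL]

end Path


section Pattern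

variable {γ : ℝ} {p : E2} {n : ℕ}

lemma horiz_pattern (P : ClosedBounce γ p n) :
    ∀ k, 1 ≤ k → k ≤ n → P.horiz k = (if Even k then !P.horiz 1 else P.horiz 1) := by
  intro k hk1 hk2
  induction k with
  | zero => omega
  | succ j ih =>
    rcases Nat.eq_or_lt_of_le hk1 with h1 | h1
    · rw [← h1]; norm_num
    · have hj1 : 1 ≤ j := by omega
      have hjn : j < n := by omega
      rw [P.alt j hj1 hjn, ih hj1 (by omega)]
      rcases Nat.even_or_odd j with he | he
      · have h2 : ¬ Even (j+1) := by simp [Nat.even_add_one, he]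
        rw [if_pos he, if_neg h2, Bool.not_not]
      · have h2 : Even (j+1) := Nat.even_add_one.mpr (Nat.not_even_iff_odd.mpr he)
        rw [if_neg (Nat.not_even_iff_odd.mpr he), if_pos h2]

lemma csum_congr (γ : ℝ) (h h' : ℕ → Bool) (k : ℕ)
    (he : ∀ j, 1 ≤ j → j ≤ k → h j = h' j) : csum γ h k = csum γ h' k := by
  induction k with
  | zero => rfl
  | succ j ih =>
    have : csum γ h j = csum γ h' j := ih (fun i hi1 hi2 => he i hi1 (by omega))
    rw [csum, csum, this, he (j+1) (by omega) le_rfl]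

lemma csum_path (P : ClosedBounce γ p n) :
    ∀ j, 2 * j ≤ n → csum γ P.horiz (2 * j) = (if P.horiz 1 then -(2*j*γ) else 2*j*γ) := by
  intro j hj
  induction j with
  | zero => simp [csum]
  | succ i ih =>
    have hi : 2 * i ≤ n := by omega
    have e1 : 2 * (i + 1) = (2 * i + 1) + 1 := by ring
    have hodd : ¬ Even (2 * i + 1) := by simp [Nat.even_add_one]
    have heven : Even (2 * i) := even_two_mul i
    have hA : P.horiz (2*i+1) = P.horiz 1 := by
      rw [horiz_pattern P (2*i+1) (by omega) (by omega), if_neg hodd]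
    have hB : P.horiz (2*i+1+1) = !P.horiz 1 := by
      rw [horiz_pattern P (2*i+1+1) (by omega) (by omega),
        if_pos (by simp [Nat.even_add_one, hodd])]
    rw [e1, csum, csum, if_neg hodd, if_pos heven, ih hi, hA, hB]
    cases hb : P.horiz 1 <;> · simp [mang, hb]; push_cast; ring

end Pattern

lemma chord_sq (θ : ℝ) (u : E2) :
    ‖vrot θ u - u‖^2 = (2 - 2 * Real.cos θ) * ‖u‖^2 := by
  rw [e2_norm, e2_norm, Real.sq_sqrt (by positivity), Real.sq_sqrt (by positivity)]
  simp only [vrot, e2_sub, pt_zero, pt_one]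
  linear_combination (u 0 ^ 2 + u 1 ^ 2) * Real.sin_sq_add_cos_sq θ


lemma total_length_formula (m : ℕ) (hm : 1 ≤ m) (γ : ℝ)
    (hγ0 : 0 < γ) (hγ1 : γ < π / 2) (hγm : γ < π / (2 * m))
    (R ψ : ℝ) (hR : 0 < R)
    (p : E2) (hp : p = pt (R * Real.sin ψ) (R * Real.cos ψ))
    (P : ClosedBounce γ p (2 * m)) : totalLength P = 2 * R * Real.sin (m * γ) := by
  have hmR : (1:ℝ) ≤ (m:ℝ) := by exact_mod_cast hm
  have hcos : 0 < Real.cos γ := Real.cos_pos_of_mem_Ioo ⟨by linarith, hγ1⟩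
  have hmγ2 : (m:ℝ) * γ < π / 2 := by
    have h1 : (m:ℝ) * γ < (m:ℝ) * (π / (2 * m)) :=
      mul_lt_mul_of_pos_left hγm (by linarith)
    have h2 : (m:ℝ) * (π / (2 * m)) = π / 2 := by
      field_simp
    linarith [h1, h2.symm.le]
  have hmγ1 : 0 < (m:ℝ) * γ := by positivity
  have hsin : 0 ≤ Real.sin ((m:ℝ) * γ) :=
    Real.sin_nonneg_of_nonneg_of_le_pi (le_of_lt hmγ1) (by linarith [Real.pi_pos])
  have hL := length_eq_norm P (ne_of_gt hcos)
  have hunf : unf γ P.horiz (2*m) p = vrot (csum γ P.horiz (2*m)) p := by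
    have hpp : pt (p 0) (p 1) = p := e2_ext rfl rfl
    rw [unf, (even_two_mul m).neg_one_pow, one_mul, hpp]
  have hcs := csum_path P m (le_refl (2*m))
  have hcos2 : Real.cos (csum γ P.horiz (2*m)) = 1 - 2 * Real.sin ((m:ℝ)*γ)^2 := by
    rw [hcs]
    have he : Real.cos (2*(m:ℝ)*γ) = 1 - 2 * Real.sin ((m:ℝ)*γ)^2 := by
      rw [show (2*(m:ℝ)*γ) = 2*((m:ℝ)*γ) by ring, Real.cos_two_mul']
      linear_combination Real.sin_sq_add_cos_sq ((m:ℝ)*γ)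
    cases P.horiz 1
    · simpa using he
    · simpa [Real.cos_neg] using he
  have hnormp : ‖p‖^2 = R^2 := by
    rw [hp, e2_norm, Real.sq_sqrt (by positivity)]
    simp only [pt_zero, pt_one]
    linear_combination R^2 * Real.sin_sq_add_cos_sq ψ
  have hsq : (totalLength P)^2 = (2*R*Real.sin ((m:ℝ)*γ))^2 := by
    rw [hL, hunf, chord_sq, hcos2, hnormp]
    ring
  have hL0 : 0 ≤ totalLength P := Finset.sum_nonneg fun _ _ => norm_nonneg _
  have hR0 : 0 ≤ 2*R*Real.sin ((m:ℝ)*γ) := by positivity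
  calc totalLength P = Real.sqrt ((totalLength P)^2) := (Real.sqrt_sq hL0).symm
    _ = Real.sqrt ((2*R*Real.sin ((m:ℝ)*γ))^2) := by rw [hsq]
    _ = 2*R*Real.sin ((m:ℝ)*γ) := Real.sqrt_sq hR0


lemma unit_neg (a b : E2) : ‖a - b‖⁻¹ • (a - b) = -(‖b - a‖⁻¹ • (b - a)) := by
  rw [norm_sub_rev, ← smul_neg, neg_sub]

lemma p_in_wedge (γ ψ R : ℝ) (hγ0 : 0 < γ) (hγ1 : γ < π / 2) (hR : 0 < R)
    (hψ1 : π / 2 - γ < ψ) (hψ2 : ψ < π / 2) :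
    0 < R * Real.cos ψ ∧ R * Real.cos ψ < (R * Real.sin ψ) * Real.tan γ := by
  have hπ := Real.pi_pos
  have hcψ : 0 < Real.cos ψ := Real.cos_pos_of_mem_Ioo ⟨by linarith, hψ2⟩
  have hsψ : 0 < Real.sin ψ := Real.sin_pos_of_pos_of_lt_pi (by linarith) (by linarith)
  have hcγ : 0 < Real.cos γ := Real.cos_pos_of_mem_Ioo ⟨by linarith, hγ1⟩
  have hsγ : 0 < Real.sin γ := Real.sin_pos_of_pos_of_lt_pi hγ0 (by linarith)
  constructor
  · positivity
  · have hco : Real.cos (ψ + γ) < 0 :=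
      Real.cos_neg_of_pi_div_two_lt_of_lt (by linarith) (by linarith)
    rw [Real.cos_add] at hco
    rw [Real.tan_eq_sin_div_cos, ← mul_div_assoc, lt_div_iff₀ hcγ]
    nlinarith

section Uniq

variable {γ : ℝ} {p : E2}

lemma uniq_same (m : ℕ) (hm : 1 ≤ m)
    (hγ0 : 0 < γ) (hγ1 : γ < π / 2) (hγm : γ < π / (2 * m))
    (hp1 : 0 < p 1) (hp2 : p 1 < p 0 * Real.tan γ)
    (P P' : ClosedBounce γ p (2 * m)) (hh : P'.horiz 1 = P.horiz 1)
    (hLpos : 0 < totalLength P) (hLeq : totalLength P' = totalLength P) :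
    ∀ k ≤ 2 * m + 1, P'.q k = P.q k := by
  have hcos : 0 < Real.cos γ := Real.cos_pos_of_mem_Ioo ⟨by linarith [Real.pi_pos], hγ1⟩
  have htan : Real.tan γ ≠ 0 :=
    ne_of_gt (Real.tan_pos_of_pos_of_lt_pi_div_two hγ0 hγ1)
  have hheq : ∀ j, 1 ≤ j → j ≤ 2 * m → P'.horiz j = P.horiz j := by
    intro j h1 h2
    rw [horiz_pattern P j h1 h2, horiz_pattern P' j h1 h2, hh]
  -- equality of unfoldings
  have hcseq : ∀ k, k ≤ 2 * m → csum γ P'.horiz k = csum γ P.horiz k := fun k hk =>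
    csum_congr γ _ _ k (fun j h1 h2 => hheq j h1 (le_trans h2 hk))
  have hunfeq : ∀ k, k ≤ 2 * m → ∀ v, unf γ P'.horiz k v = unf γ P.horiz k v := by
    intro k hk v; rw [unf, unf, hcseq k hk]
  -- the initial directions agree
  have e1 := unf_pt P (ne_of_gt hcos) (2*m) le_rfl
  have e1' := unf_pt P' (ne_of_gt hcos) (2*m) le_rfl
  rw [P.closes] at e1
  rw [P'.closes] at e1'
  have hsum : (∑ k ∈ Finset.range (2*m+1), ‖P.q (k+1) - P.q k‖) = totalLength P := rfl
  have hsum' : (∑ k ∈ Finset.range (2*m+1), ‖P'.q (k+1) - P'.q k‖) = totalLength P' := rfl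
  rw [hsum] at e1
  rw [hsum', hLeq] at e1'
  have dir0 : dirv P' 0 = dirv P 0 := by
    have h2 : p + totalLength P • dirv P' 0 = p + totalLength P • dirv P 0 := by
      rw [← e1, ← e1', hunfeq (2*m) le_rfl]
    have h3 := add_left_cancel h2
    exact smul_right_injective E2 (ne_of_gt hLpos) h3
  have dirk : ∀ k, k ≤ 2 * m → dirv P' k = dirv P k := by
    intro k hk
    have u' := dirv_unf P' k hk
    have u := dirv_unf P k hk
    apply unf_inj γ P.horiz k
    rw [← hunfeq k hk (dirv P' k), u', u, dir0]
  have key : ∀ k, k ≤ 2 * m → P'.q k = P.q k := by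
    intro k
    induction k with
    | zero => intro _; rw [P.start, P'.start]
    | succ k ih =>
      intro hk1
      have hqk := ih (by omega)
      have hb' : P'.horiz (k+1) = P.horiz (k+1) := hheq (k+1) (by omega) hk1
      have hOn : lf γ (P.horiz (k+1)) (P.q (k+1)) = 0 :=
        (onBoundary_iff_lf _ _ _).mp (P.onLine (k+1) (by omega) hk1)
      have hOn' : lf γ (P.horiz (k+1)) (P'.q (k+1)) = 0 := by
        rw [← hb']; exact (onBoundary_iff_lf _ _ _).mp (P'.onLine (k+1) (by omega) hk1)
      have hEq : P.q (k+1) = P.q k + ‖P.q (k+1) - P.q k‖ • dirv P k :=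
        q_succ_eq P (by omega)
      have hEq' : P'.q (k+1) = P'.q k + ‖P'.q (k+1) - P'.q k‖ • dirv P' k :=
        q_succ_eq P' (by omega)
      have hdir : dirv P' k = dirv P k := dirk k (by omega)
      have ha : lf γ (P.horiz (k+1)) (P.q k)
          + ‖P.q (k+1) - P.q k‖ * lf γ (P.horiz (k+1)) (dirv P k) = 0 := by
        rw [← lf_affine, ← hEq, hOn]
      have ha' : lf γ (P.horiz (k+1)) (P.q k)
          + ‖P'.q (k+1) - P'.q k‖ * lf γ (P.horiz (k+1)) (dirv P k) = 0 := by
        rw [← lf_affine, ← hqk, ← hdir, ← hEq', hOn']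
      have hfv : lf γ (P.horiz (k+1)) (dirv P k) ≠ 0 := by
        intro h0
        rw [h0, mul_zero, add_zero] at ha
        rcases Nat.eq_zero_or_pos k with hk0 | hk0
        · subst hk0
          rw [P.start] at ha
          cases hbv : P.horiz 1
          · rw [hbv] at ha; simp only [lf, Bool.false_eq_true, if_false] at ha; linarith
          · rw [hbv] at ha; simp only [lf, if_true] at ha; linarith
        · have halt : P.horiz (k+1) = !P.horiz k := P.alt k hk0 (by omega)
          have honk := P.onLine k hk0 (by omega)
          have hzero : P.q k = 0 := by
            cases hbk : P.horiz k
            · rw [hbk] at honk halt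
              simp only [onBoundary, Bool.false_eq_true, if_false] at honk
              rw [halt] at ha
              simp only [lf, Bool.not_false, if_true] at ha
              exact both_lines_eq_zero htan ha honk
            · rw [hbk] at honk halt
              simp only [onBoundary, if_true] at honk
              rw [halt] at ha
              simp only [lf, Bool.not_true, Bool.false_eq_true, if_false] at ha
              exact both_lines_eq_zero htan honk (by linarith)
          exact P.bounce_ne_vertex k hk0 (by omega) hzero
      have ht : ‖P'.q (k+1) - P'.q k‖ = ‖P.q (k+1) - P.q k‖ :=
        mul_right_cancel₀ hfv (by linarith)
      rw [hEq', ht, hqk, hdir, ← hEq]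
  intro k hk
  rcases Nat.lt_or_ge k (2*m+1) with h | h
  · exact key k (by omega)
  · have : k = 2*m+1 := by omega
    subst this
    rw [P.closes, P'.closes]

end Uniq


/-- The reverse of a closed bounce path. -/
def revP {γ : ℝ} {p : E2} {n : ℕ} (P : ClosedBounce γ p n) : ClosedBounce γ p n where
  q k := P.q (n + 1 - k)
  horiz k := P.horiz (n + 1 - k)
  alt k hk1 hk2 := by
    have e1 : n + 1 - k = (n - k) + 1 := by omega
    have e2 : n + 1 - (k + 1) = n - k := by omega
    beta_reduce
    rw [e1, e2, P.alt (n - k) (by omega) (by omega), Bool.not_not]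
  start := by simpa using P.closes
  closes := by simpa using P.start
  distinct k hk := by
    have e1 : n + 1 - k = (n - k) + 1 := by omega
    have e2 : n + 1 - (k + 1) = n - k := by omega
    beta_reduce
    rw [e1, e2]
    exact (P.distinct (n - k) (by omega)).symm
  bounce_ne_vertex k hk1 hk2 := P.bounce_ne_vertex _ (by omega) (by omega)
  onLine k hk1 hk2 := P.onLine _ (by omega) (by omega)
  segs_in_wedge k hk t ht0 ht1 := by
    have e1 : n + 1 - k = (n - k) + 1 := by omega
    have e2 : n + 1 - (k + 1) = n - k := by omega
    beta_reduce
    rw [e1, e2]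
    have h := P.segs_in_wedge (n - k) (by omega) (1 - t) (by linarith) (by linarith)
    rw [show (1:ℝ) - (1 - t) = t from by ring] at h
    rw [add_comm]
    exact h
  reflects k hk1 hk2 := by
    have e1 : n + 1 - (k + 1) = n - k := by omega
    have e2 : n + 1 - k = (n - k) + 1 := by omega
    have e3 : n + 1 - (k - 1) = (n - k) + 2 := by omega
    beta_reduce
    rw [e1, e2, e3]
    set j := n - k with hj
    have horig := P.reflects (j + 1) (by omega) (by omega)
    rw [show j + 1 - 1 = j from by omega] at horig
    set d := lineDir γ (P.horiz (j + 1)) with hd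
    have h2 : reflDir d (‖P.q (j + 1 + 1) - P.q (j + 1)‖⁻¹ • (P.q (j + 1 + 1) - P.q (j + 1)))
        = ‖P.q (j + 1) - P.q j‖⁻¹ • (P.q (j + 1) - P.q j) := by
      rw [horig, hd, reflDir_invol]
    rw [show j + 2 = j + 1 + 1 from by omega]
    rw [unit_neg (P.q j) (P.q (j+1)), unit_neg (P.q (j+1)) (P.q (j+1+1))]
    rw [reflDir_neg, h2]

/- ### placeholder6 ### -/

/-- For an integer `m ≥ 1` and `γ ∈ (0, π/2)` with `γ < π/(2m)`, every closed
`2m`-bounce billiard path based at the point `(R sin ψ, R cos ψ)` of the wedge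
(with `R > 0` and `π/2 − γ < ψ < π/2`) has total length `2R·sin(mγ)`; moreover
there are at most two such paths, and if there are two then one is the reverse
of the other. -/
theorem even_bounce_length_and_uniqueness (m : ℕ) (hm : 1 ≤ m) (γ : ℝ)
    (hγ0 : 0 < γ) (hγ1 : γ < π / 2) (hγm : γ < π / (2 * m))
    (R ψ : ℝ) (hR : 0 < R) (hψ1 : π / 2 - γ < ψ) (hψ2 : ψ < π / 2)
    (p : E2) (hp : p = pt (R * Real.sin ψ) (R * Real.cos ψ)) :
    (∀ P : ClosedBounce γ p (2 * m), totalLength P = 2 * R * Real.sin (m * γ)) ∧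
    (∀ P P' : ClosedBounce γ p (2 * m),
      (∀ k ≤ 2 * m + 1, P'.q k = P.q k) ∨
      (∀ k ≤ 2 * m + 1, P'.q k = P.q (2 * m + 1 - k))) := by
  have hπ := Real.pi_pos
  have hmR : (1:ℝ) ≤ (m:ℝ) := by exact_mod_cast hm
  have hmγ2 : (m:ℝ) * γ < π / 2 := by
    have h1 : (m:ℝ) * γ < (m:ℝ) * (π / (2 * m)) :=
      mul_lt_mul_of_pos_left hγm (by linarith)
    have h2 : (m:ℝ) * (π / (2 * m)) = π / 2 := by field_simp
    linarith [h1, h2.symm.le]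
  have hmγ1 : 0 < (m:ℝ) * γ := by positivity
  have hsin : 0 < Real.sin ((m:ℝ) * γ) :=
    Real.sin_pos_of_pos_of_lt_pi hmγ1 (by linarith)
  have hlen : ∀ P : ClosedBounce γ p (2 * m), totalLength P = 2 * R * Real.sin (m * γ) :=
    fun P => total_length_formula m hm γ hγ0 hγ1 hγm R ψ hR p hp P
  refine ⟨hlen, ?_⟩
  intro P P'
  obtain ⟨hw1, hw2⟩ := p_in_wedge γ ψ R hγ0 hγ1 hR hψ1 hψ2
  have hp1' : 0 < p 1 := by rw [hp]; simpa using hw1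
  have hp2' : p 1 < p 0 * Real.tan γ := by rw [hp]; simpa using hw2
  have hLpos : 0 < totalLength P := by rw [hlen P]; positivity
  by_cases hh : P'.horiz 1 = P.horiz 1
  · left
    exact uniq_same m hm hγ0 hγ1 hγm hp1' hp2' P P' hh hLpos ((hlen P').trans (hlen P).symm)
  · right
    set Q := revP P with hQ
    have hQh : P'.horiz 1 = Q.horiz 1 := by
      have h1 : Q.horiz 1 = P.horiz (2 * m) := by
        show P.horiz (2 * m + 1 - 1) = P.horiz (2 * m)
        norm_num
      have h2 : P.horiz (2 * m) = !P.horiz 1 := by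
        rw [horiz_pattern P (2 * m) (by omega) le_rfl, if_pos (even_two_mul m)]
      rw [h1, h2]
      cases hb : P.horiz 1 <;> cases hb' : P'.horiz 1 <;> simp_all
    have hQpos : 0 < totalLength Q := by rw [hlen Q]; positivity
    have hQeq : totalLength P' = totalLength Q := (hlen P').trans (hlen Q).symm
    have hkey := uniq_same m hm hγ0 hγ1 hγm hp1' hp2' Q P' hQh hQpos hQeq
    intro k hk
    rw [hkey k hk]
    rfl

end
end

section
/- Let m ≥ 1 be an integer, γ ∈ (0, π/2) with γ < π/(2m), and p = (R sin ψ, R cos ψ) ∈ W_γ with R > 0 and π/2 − γ < ψ < π/2. Then every closed (2m+1)-bounce billiard path based at p whose first bounce lies on ℓ₀ has total length 2R·|cos(ψ − mγ)|, and every closed (2m+1)-bounce billiard path based at p whose first bounce lies on ℓ_γ has total length 2R·|cos(ψ + (m+1)γ)|. -/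
open Real

noncomputable section

/-! ### Auxiliary machinery: complexification and unfolding -/

/-- Identify the Euclidean plane with `ℂ`. -/
def toC (v : E2) : ℂ := ⟨v 0, v 1⟩

/-- The angle of the boundary line. -/
def angOf (γ : ℝ) (b : Bool) : ℝ := if b then 0 else γ

lemma toC_sub (a b : E2) : toC (a - b) = toC a - toC b := by
  simp [toC, Complex.ext_iff, PiLp.sub_apply]

lemma toC_smul (r : ℝ) (a : E2) : toC (r • a) = (r : ℂ) * toC a := by
  simp [toC, Complex.ext_iff, PiLp.smul_apply, smul_eq_mul]

lemma abs_toC (v : E2) : ‖toC v‖ = ‖v‖ := by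
  rw [EuclideanSpace.norm_eq, Complex.norm_def, Complex.normSq_mk]
  simp [Fin.sum_univ_two, toC, sq]

lemma exp_mk (x : ℝ) : Complex.exp ((x:ℂ) * Complex.I) = ⟨Real.cos x, Real.sin x⟩ := by
  simp [Complex.ext_iff, Complex.exp_ofReal_mul_I_re, Complex.exp_ofReal_mul_I_im]

lemma pt_apply0 (x y : ℝ) : (pt x y) 0 = x := rfl
lemma pt_apply1 (x y : ℝ) : (pt x y) 1 = y := rfl

lemma inner_pt (x y : ℝ) (v : E2) : (inner ℝ v (pt x y) : ℝ) = v 0 * x + v 1 * y := by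
  simp [PiLp.inner_apply, Fin.sum_univ_two, pt_apply0, pt_apply1]
  ring

lemma toC_reflDir (γ : ℝ) (b : Bool) (v : E2) :
    toC (reflDir (lineDir γ b) v) =
      Complex.exp ((2 * angOf γ b : ℝ) * Complex.I) * (starRingEnd ℂ) (toC v) := by
  have hpyth : Real.cos γ * Real.cos γ + Real.sin γ * Real.sin γ = 1 := by
    have := Real.sin_sq_add_cos_sq γ; nlinarith
  cases b with
  | true =>
    simp only [reflDir, lineDir, angOf, if_pos, exp_mk, toC, Complex.ext_iff]
    rw [inner_pt, inner_pt]
    simp only [PiLp.sub_apply, PiLp.smul_apply, pt_apply0, pt_apply1, Complex.mul_re,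
      Complex.mul_im, smul_eq_mul, Complex.conj_re, Complex.conj_im, mul_zero,
      Real.cos_zero, Real.sin_zero]
    constructor <;> ring
  | false =>
    simp only [reflDir, lineDir, angOf, Bool.false_eq_true, if_false, exp_mk, toC,
      Complex.ext_iff]
    rw [inner_pt, inner_pt]
    simp only [PiLp.sub_apply, PiLp.smul_apply, pt_apply0, pt_apply1, Complex.mul_re,
      Complex.mul_im, smul_eq_mul, Complex.conj_re, Complex.conj_im, hpyth,
      Real.cos_two_mul, Real.sin_two_mul]
    exact ⟨by ring, by linear_combination (2 * v 1) * hpyth⟩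

/-- The rotation/reflection angle accumulated after `k` bounces. -/
def theta (γ : ℝ) (h : ℕ → Bool) : ℕ → ℝ
  | 0 => 0
  | (k+1) => theta γ h k +
      (if (k+1) % 2 = 1 then 2 * angOf γ (h (k+1)) else -(2 * angOf γ (h (k+1))))

/-- The unfolding isometry after `k` bounces, as a map of `ℂ`. -/
def Tc (γ : ℝ) (h : ℕ → Bool) (k : ℕ) (z : ℂ) : ℂ :=
  Complex.exp ((theta γ h k : ℝ) * Complex.I) * (if k % 2 = 0 then z else (starRingEnd ℂ) z)

lemma theta_succ (γ : ℝ) (h : ℕ → Bool) (k : ℕ) :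
    theta γ h (k+1) = theta γ h k +
      (if (k+1) % 2 = 1 then 2 * angOf γ (h (k+1)) else -(2 * angOf γ (h (k+1)))) := rfl

lemma conj_exp_real_mul_I (x : ℝ) :
    (starRingEnd ℂ) (Complex.exp ((x:ℂ) * Complex.I)) = Complex.exp ((-x:ℝ) * Complex.I) := by
  rw [← Complex.exp_conj]; congr 1
  simp [Complex.conj_I]

lemma Tc_step (γ : ℝ) (h : ℕ → Bool) (k : ℕ) (z : ℂ) :
    Tc γ h (k+1) (Complex.exp ((2 * angOf γ (h (k+1)) : ℝ) * Complex.I) * (starRingEnd ℂ) z)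
      = Tc γ h k z := by
  set a := angOf γ (h (k+1)) with ha
  rcases Nat.even_or_odd k with he | ho
  · have h1 : k % 2 = 0 := Nat.even_iff.mp he
    have h2 : (k+1) % 2 = 1 := by omega
    simp only [Tc, theta_succ, h1, h2, ← ha, if_pos, if_neg (by omega : ¬ (k+1) % 2 = 0),
      reduceIte, map_mul, conj_exp_real_mul_I, Complex.conj_conj]
    norm_num
    rw [← mul_assoc, ← Complex.exp_add]
    push_cast; ring_nf
  · have h1 : k % 2 = 1 := Nat.odd_iff.mp ho
    have h2 : (k+1) % 2 = 0 := by omega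
    simp only [Tc, theta_succ, h1, h2, ← ha, if_pos, if_neg (by omega : ¬ (k+1) % 2 = 1),
      if_neg (by omega : ¬ k % 2 = 0), reduceIte]
    norm_num
    rw [← mul_assoc, ← Complex.exp_add]
    push_cast; ring_nf

lemma Tc_real_mul (γ : ℝ) (h : ℕ → Bool) (k : ℕ) (r : ℝ) (z : ℂ) :
    Tc γ h k ((r:ℂ) * z) = (r:ℂ) * Tc γ h k z := by
  simp only [Tc, map_mul, Complex.conj_ofReal]
  split_ifs <;> ring

lemma Tc_sub (γ : ℝ) (h : ℕ → Bool) (k : ℕ) (y z : ℂ) :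
    Tc γ h k (y - z) = Tc γ h k y - Tc γ h k z := by
  simp only [Tc, map_sub]
  split_ifs <;> ring

lemma Tc_zero (γ : ℝ) (h : ℕ → Bool) (z : ℂ) : Tc γ h 0 z = z := by
  simp [Tc, theta]

lemma fixed_point (γ : ℝ) (hc : Real.cos γ ≠ 0) (b : Bool) (q : E2)
    (hq : onBoundary γ b q) :
    Complex.exp ((2 * angOf γ b : ℝ) * Complex.I) * (starRingEnd ℂ) (toC q) = toC q := by
  have hpyth : Real.sin γ ^ 2 + Real.cos γ ^ 2 = 1 := Real.sin_sq_add_cos_sq γ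
  cases b with
  | true =>
    have hq1 : q 1 = 0 := hq
    simp only [angOf, if_pos, mul_zero, exp_mk, Real.cos_zero, Real.sin_zero, toC,
      Complex.ext_iff, Complex.mul_re, Complex.mul_im, Complex.conj_re, Complex.conj_im, hq1]
    norm_num
  | false =>
    have hq1 : q 1 = q 0 * Real.tan γ := hq
    rw [Real.tan_eq_sin_div_cos] at hq1
    simp only [angOf, Bool.false_eq_true, if_false, exp_mk, toC, Complex.ext_iff,
      Complex.mul_re, Complex.mul_im, Complex.conj_re, Complex.conj_im, hq1,
      Real.cos_two_mul, Real.sin_two_mul]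
    constructor
    · field_simp
      linear_combination (2 * q 0) * hpyth
    · field_simp
      ring

lemma theta_true (γ : ℝ) (h : ℕ → Bool) (m : ℕ)
    (hp : ∀ j, 1 ≤ j → j ≤ 2*m+1 → h j = decide (j % 2 = 1)) :
    theta γ h (2*m+1) = -(2*m*γ) := by
  induction m with
  | zero =>
      have h1 : h 1 = true := by rw [hp 1 (by omega) (by omega)]; simp
      simp [theta, h1, angOf]
  | succ n ih =>
      have hn : theta γ h (2*n+1) = -(2*n*γ) :=
        ih (fun j hj1 hj2 => hp j hj1 (by omega))
      have h2 : h (2*n+2) = false := by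
        rw [hp (2*n+2) (by omega) (by omega)]
        simp only [decide_eq_false_iff_not, decide_eq_true_eq]; omega
      have h3 : h (2*n+3) = true := by
        rw [hp (2*n+3) (by omega) (by omega)]
        simp only [decide_eq_false_iff_not, decide_eq_true_eq]; omega
      have e1 : 2*(n+1)+1 = (2*n+2)+1 := by ring
      have e2 : (2*n+2) = (2*n+1)+1 := by ring
      rw [e1, theta_succ, e2, theta_succ, ← e2, hn, h2, h3]
      rw [if_neg (by omega), if_pos (by omega)]
      simp only [angOf, if_pos, Bool.false_eq_true, if_false]
      push_cast; ring

lemma theta_false (γ : ℝ) (h : ℕ → Bool) (m : ℕ)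
    (hp : ∀ j, 1 ≤ j → j ≤ 2*m+1 → h j = decide (j % 2 = 0)) :
    theta γ h (2*m+1) = 2*(m+1)*γ := by
  induction m with
  | zero =>
      have h1 : h 1 = false := by rw [hp 1 (by omega) (by omega)]; simp
      simp [theta, h1, angOf]
  | succ n ih =>
      have hn : theta γ h (2*n+1) = 2*(n+1)*γ :=
        ih (fun j hj1 hj2 => hp j hj1 (by omega))
      have h2 : h (2*n+2) = true := by
        rw [hp (2*n+2) (by omega) (by omega)]
        simp only [decide_eq_false_iff_not, decide_eq_true_eq]; omega
      have h3 : h (2*n+3) = false := by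
        rw [hp (2*n+3) (by omega) (by omega)]
        simp only [decide_eq_false_iff_not, decide_eq_true_eq]; omega
      have e1 : 2*(n+1)+1 = (2*n+2)+1 := by ring
      have e2 : (2*n+2) = (2*n+1)+1 := by ring
      rw [e1, theta_succ, e2, theta_succ, ← e2, hn, h2, h3]
      rw [if_neg (by omega), if_pos (by omega)]
      simp only [angOf, if_pos, Bool.false_eq_true, if_false]
      push_cast; ring

lemma abs_formula (Θ R ψ : ℝ) (hR : 0 ≤ R) :
    ‖(Complex.exp ((Θ:ℂ) * Complex.I) *
        (starRingEnd ℂ) (⟨R * Real.sin ψ, R * Real.cos ψ⟩ : ℂ)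
      - (⟨R * Real.sin ψ, R * Real.cos ψ⟩ : ℂ))‖ = 2 * R * |Real.cos (Θ/2 + ψ)| := by
  have hexp : Complex.exp ((Θ:ℂ) * Complex.I) = ⟨Real.cos Θ, Real.sin Θ⟩ := by
    simp [Complex.ext_iff, Complex.exp_ofReal_mul_I_re, Complex.exp_ofReal_mul_I_im]
  rw [hexp, Complex.norm_def]
  have hre : ((⟨Real.cos Θ, Real.sin Θ⟩ : ℂ) *
      (starRingEnd ℂ) (⟨R * Real.sin ψ, R * Real.cos ψ⟩ : ℂ)
      - (⟨R * Real.sin ψ, R * Real.cos ψ⟩ : ℂ)) =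
      ⟨Real.cos Θ * (R * Real.sin ψ) + Real.sin Θ * (R * Real.cos ψ) - R * Real.sin ψ,
       Real.sin Θ * (R * Real.sin ψ) - Real.cos Θ * (R * Real.cos ψ) - R * Real.cos ψ⟩ := by
    simp only [Complex.ext_iff, Complex.mul_re, Complex.mul_im, Complex.sub_re, Complex.sub_im,
      Complex.conj_re, Complex.conj_im]
    constructor <;> ring
  rw [hre, Complex.normSq_mk]
  have e1 : Real.cos (Θ + 2*ψ) = Real.cos Θ * Real.cos (2*ψ) - Real.sin Θ * Real.sin (2*ψ) :=
    Real.cos_add _ _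
  have e2 : Real.cos (2*ψ) = 2*Real.cos ψ^2 - 1 := Real.cos_two_mul ψ
  have e5 : Real.cos (Θ+2*ψ) = 2 * Real.cos (Θ/2+ψ)^2 - 1 := by
    rw [show Θ+2*ψ = 2*(Θ/2+ψ) by ring, Real.cos_two_mul]
  have e6 : Real.cos Θ*(2*Real.cos ψ^2-1) - Real.sin Θ*(2*Real.sin ψ*Real.cos ψ)
      = 2*Real.cos (Θ/2+ψ)^2 - 1 := by
    rw [← e2, ← Real.sin_two_mul, ← e1, e5]
  have h5 : Real.sin ψ^2 + Real.cos ψ^2 = 1 := Real.sin_sq_add_cos_sq _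
  have h6 : Real.sin Θ^2 + Real.cos Θ^2 = 1 := Real.sin_sq_add_cos_sq _
  have key : (Real.cos Θ * (R * Real.sin ψ) + Real.sin Θ * (R * Real.cos ψ) - R * Real.sin ψ) *
        (Real.cos Θ * (R * Real.sin ψ) + Real.sin Θ * (R * Real.cos ψ) - R * Real.sin ψ) +
      (Real.sin Θ * (R * Real.sin ψ) - Real.cos Θ * (R * Real.cos ψ) - R * Real.cos ψ) *
        (Real.sin Θ * (R * Real.sin ψ) - Real.cos Θ * (R * Real.cos ψ) - R * Real.cos ψ)
      = (2 * R * Real.cos (Θ/2 + ψ))^2 := by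
    linear_combination (R^2*(Real.sin Θ^2 + Real.cos Θ^2 + 1 - 2*Real.cos Θ)) * h5
      + R^2 * h6 + (2*R^2) * e6
  rw [key, Real.sqrt_sq_eq_abs, abs_mul, abs_mul]
  rw [abs_of_nonneg (by norm_num : (0:ℝ) ≤ 2), abs_of_nonneg hR]

lemma pattern {γ : ℝ} {p : E2} {n : ℕ} (P : ClosedBounce γ p n) :
    ∀ j, 1 ≤ j → j ≤ n → P.horiz j = (if j % 2 = 1 then P.horiz 1 else !P.horiz 1) := by
  intro j
  induction j with
  | zero => omega
  | succ k ih =>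
    intro _ hj
    by_cases hk : 1 ≤ k
    · rw [P.alt k hk (by omega), ih hk (by omega)]
      rcases Nat.even_or_odd k with he | ho
      · have h1 : k % 2 = 0 := Nat.even_iff.mp he
        rw [if_neg (by omega), if_pos (by omega), Bool.not_not]
      · have h1 : k % 2 = 1 := Nat.odd_iff.mp ho
        rw [if_pos (by omega), if_neg (by omega)]
    · have hk0 : k = 0 := by omega
      subst hk0
      simp

lemma master {γ : ℝ} {p : E2} {n : ℕ} (hc : Real.cos γ ≠ 0) (P : ClosedBounce γ p n) :
    totalLength P = ‖Tc γ P.horiz n (toC p) - toC p‖ := by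
  set v : ℕ → E2 := fun k => P.q (k+1) - P.q k with hv
  have hvne : ∀ k ≤ n, ‖v k‖ ≠ 0 := by
    intro k hk
    exact norm_ne_zero_iff.mpr (sub_ne_zero_of_ne (Ne.symm (P.distinct k hk)))
  set uC : ℂ := (‖v 0‖:ℂ)⁻¹ * toC (v 0) with huC
  have claim1 : ∀ k ≤ n, Tc γ P.horiz k (toC (v k)) = (‖v k‖:ℂ) * uC := by
    intro k
    induction k with
    | zero =>
      intro _
      rw [Tc_zero, huC, ← mul_assoc, mul_inv_cancel₀, one_mul]
      exact_mod_cast hvne 0 (by omega)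
    | succ k ih =>
      intro hk
      have hk' : k ≤ n := by omega
      have hrefl := P.reflects (k+1) (by omega) hk
      simp only [Nat.add_sub_cancel] at hrefl
      have hC := congrArg toC hrefl
      rw [show P.q (k+1+1) - P.q (k+1) = v (k+1) from rfl,
        show P.q (k+1) - P.q k = v k from rfl] at hC
      rw [toC_smul, toC_reflDir, toC_smul, map_mul, Complex.conj_ofReal] at hC
      have hk1 : (‖v (k+1)‖ : ℂ) ≠ 0 := by exact_mod_cast hvne (k+1) hk
      have hk0 : (‖v k‖ : ℂ) ≠ 0 := by exact_mod_cast hvne k hk'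
      have h2 := congrArg (fun z => ((‖v (k+1)‖:ℝ):ℂ) * z) hC
      rw [Complex.ofReal_inv, ← mul_assoc, mul_inv_cancel₀ hk1, one_mul] at h2
      have hvk1 : toC (v (k+1)) = ((‖v (k+1)‖:ℝ):ℂ) * (((‖v k‖⁻¹:ℝ)):ℂ) *
          (Complex.exp (((2 * angOf γ (P.horiz (k+1)) : ℝ):ℂ) * Complex.I) *
            (starRingEnd ℂ) (toC (v k))) := by
        rw [h2]; ring
      rw [hvk1, mul_assoc, Tc_real_mul, Tc_real_mul, Tc_step, ih hk']
      rw [Complex.ofReal_inv, ← mul_assoc ((‖v k‖:ℂ))⁻¹, inv_mul_cancel₀ hk0, one_mul]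
  have claim2 : ∀ k ≤ n, ∑ j ∈ Finset.range (k+1), (‖v j‖:ℂ) * uC
      = Tc γ P.horiz k (toC (P.q (k+1))) - toC p := by
    intro k
    induction k with
    | zero =>
      intro _
      have hv0 : toC (v 0) = toC (P.q 1) - toC (P.q 0) := by
        simp only [hv]; exact toC_sub _ _
      rw [Finset.sum_range_one, ← claim1 0 (by omega), Tc_zero, Tc_zero, hv0, P.start]
    | succ k ih =>
      intro hk
      have hk' : k ≤ n := by omega
      have hfix : Tc γ P.horiz (k+1) (toC (P.q (k+1))) = Tc γ P.horiz k (toC (P.q (k+1))) := by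
        conv_lhs => rw [← fixed_point γ hc (P.horiz (k+1)) (P.q (k+1))
          (P.onLine (k+1) (by omega) hk)]
        exact Tc_step γ P.horiz k (toC (P.q (k+1)))
      have hv2 : toC (v (k+1)) = toC (P.q (k+2)) - toC (P.q (k+1)) := by
        simp only [hv]; exact toC_sub _ _
      have hTv : Tc γ P.horiz (k+1) (toC (v (k+1)))
          = Tc γ P.horiz (k+1) (toC (P.q (k+2))) - Tc γ P.horiz k (toC (P.q (k+1))) := by
        rw [hv2, Tc_sub, hfix]
      rw [Finset.sum_range_succ, ih hk', ← claim1 (k+1) hk, hTv]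
      ring
  have hfin := claim2 n le_rfl
  rw [P.closes] at hfin
  rw [← Finset.sum_mul] at hfin
  have habs := congrArg (‖·‖) hfin
  rw [norm_mul] at habs
  have hsum : ∑ j ∈ Finset.range (n+1), (‖v j‖:ℂ) = ((totalLength P : ℝ) : ℂ) := by
    rw [totalLength]
    push_cast
    rfl
  have huCabs : ‖uC‖ = 1 := by
    rw [huC, norm_mul, norm_inv, abs_toC, Complex.norm_real, Real.norm_eq_abs, abs_of_nonneg (norm_nonneg _),
      inv_mul_cancel₀ (hvne 0 (by omega))]
  have htl : (0:ℝ) ≤ totalLength P := by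
    rw [totalLength]; exact Finset.sum_nonneg fun i _ => norm_nonneg _
  rw [hsum, Complex.norm_real, Real.norm_eq_abs, huCabs, mul_one, abs_of_nonneg htl] at habs
  exact habs

/-- Let `m ≥ 1`, `γ ∈ (0, π/2)` with `γ < π/(2m)`, and `p = (R sin ψ, R cos ψ)` a
point of the wedge `W_γ` with `R > 0` and `π/2 − γ < ψ < π/2`.  Every closed
`(2m+1)`-bounce billiard path based at `p` whose first bounce is on `ℓ₀` has
total length `2R·|cos(ψ − mγ)|`, and every one whose first bounce is on `ℓ_γ`
has total length `2R·|cos(ψ + (m+1)γ)|`. -/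
theorem odd_bounce_length (m : ℕ) (hm : 1 ≤ m) (γ : ℝ)
    (hγ0 : 0 < γ) (hγ1 : γ < π / 2) (hγm : γ < π / (2 * m))
    (R ψ : ℝ) (hR : 0 < R) (hψ1 : π / 2 - γ < ψ) (hψ2 : ψ < π / 2)
    (p : E2) (hp : p = pt (R * Real.sin ψ) (R * Real.cos ψ)) :
    (∀ P : ClosedBounce γ p (2 * m + 1), P.horiz 1 = true →
      totalLength P = 2 * R * |Real.cos (ψ - m * γ)|) ∧
    (∀ P : ClosedBounce γ p (2 * m + 1), P.horiz 1 = false →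
      totalLength P = 2 * R * |Real.cos (ψ + (m + 1 : ℝ) * γ)|) := by
  have hc : Real.cos γ ≠ 0 :=
    ne_of_gt (Real.cos_pos_of_mem_Ioo ⟨by linarith, hγ1⟩)
  have hodd : (2*m+1) % 2 = 1 := by omega
  have hpc : toC p = (⟨R * Real.sin ψ, R * Real.cos ψ⟩ : ℂ) := by
    rw [hp]; rfl
  constructor
  · intro P hb
    have hpat : ∀ j, 1 ≤ j → j ≤ 2*m+1 → P.horiz j = decide (j % 2 = 1) := by
      intro j hj1 hj2
      rw [pattern P j hj1 hj2, hb]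
      by_cases h : j % 2 = 1
      · rw [if_pos h, decide_eq_true h]
      · rw [if_neg h, decide_eq_false h]; rfl
    have hth : theta γ P.horiz (2*m+1) = -(2*m*γ) := theta_true γ P.horiz m hpat
    rw [master hc P]
    have hTc : Tc γ P.horiz (2*m+1) (toC p)
        = Complex.exp (((-(2*m*γ) : ℝ) :ℂ) * Complex.I) * (starRingEnd ℂ) (toC p) := by
      rw [Tc, if_neg (by omega : ¬ (2*m+1) % 2 = 0), hth]
    rw [hTc, hpc, abs_formula _ _ _ hR.le]
    rw [show -(2*(m:ℝ)*γ)/2 + ψ = ψ - m*γ by ring]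
  · intro P hb
    have hpat : ∀ j, 1 ≤ j → j ≤ 2*m+1 → P.horiz j = decide (j % 2 = 0) := by
      intro j hj1 hj2
      rw [pattern P j hj1 hj2, hb]
      by_cases h : j % 2 = 1
      · rw [if_pos h, decide_eq_false (by omega : ¬ j % 2 = 0)]
      · rw [if_neg h, decide_eq_true (by omega : j % 2 = 0)]; rfl
    have hth : theta γ P.horiz (2*m+1) = 2*(m+1)*γ := theta_false γ P.horiz m hpat
    rw [master hc P]
    have hTc : Tc γ P.horiz (2*m+1) (toC p)
        = Complex.exp (((2*(m+1)*γ : ℝ) :ℂ) * Complex.I) * (starRingEnd ℂ) (toC p) := by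
      rw [Tc, if_neg (by omega : ¬ (2*m+1) % 2 = 0), hth]
    rw [hTc, hpc, abs_formula _ _ _ hR.le]
    rw [show 2*((m:ℝ)+1)*γ/2 + ψ = ψ + ((m:ℝ)+1)*γ by ring]

end
end
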